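/- Suppose x, y : Fin n → ℝ are non-increasing nonnegative sequences with x_j = y_j for all j > i, x_i ≥ y_i, and a valuation vector v, another vector w with v_{j+1} ≥ w_j for all j ≥ i. Then Σ_{j=i+1}^{n} (x_{j-1} - x_j) v_j ≥ Σ_{j=i+1}^{n} (y_{j-1} - y_j) w_{j-1}. -/

import Mathlib

theorem profit_extractor_domination (n i : ℕ) (x y v w : ℕ → ℝ)
    (hxmono : ∀ j, x (j + 1) ≤ x j) (hxpos : ∀ j, 0 ≤ x j)
    (hymono : ∀ j, y (j + 1) ≤ y j) (hypos : ∀ j, 0 ≤ y j)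
    (hvpos : ∀ j, 0 ≤ v j) (hwpos : ∀ j, 0 ≤ w j)
    (hxy : ∀ j, i < j → x j = y j) (hxi : x i ≥ y i)
    (hvw : ∀ j, i ≤ j → w j ≤ v (j + 1)) :
    ∑ j ∈ Finset.Ico (i + 1) n, (x (j - 1) - x j) * v j
      ≥ ∑ j ∈ Finset.Ico (i + 1) n, (y (j - 1) - y j) * w (j - 1) := by
  apply Finset.sum_le_sum
  intro j hj
  rw [Finset.mem_Ico] at hj
  obtain ⟨h1, h2⟩ := hj
  have hj1 : j - 1 + 1 = j := by omega
  have hw : w (j - 1) ≤ v j := by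
    have := hvw (j - 1) (by omega); rwa [hj1] at this
  have hd0 : 0 ≤ y (j - 1) - y j := by
    have := hymono (j - 1); rw [hj1] at this; linarith
  have hd : y (j - 1) - y j ≤ x (j - 1) - x j := by
    rcases eq_or_lt_of_le h1 with h | h
    · have hji : j - 1 = i := by omega
      rw [hji, hxy j (by omega)]; linarith
    · rw [hxy (j - 1) (by omega), hxy j (by omega)]
  exact mul_le_mul hd hw (hwpos _) (le_trans hd0 hd)
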